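/- Let L be a field of prime characteristic p, K ⊆ L a subfield, and e ≥ 1. Suppose φ : L → L is a p^{−e}-linear map such that φ(K) ⊆ K and the restriction φ|_K is not identically zero. Then every element of L that is algebraic over K is separable over K. (Corollary: for a log canonical place E over an F-pure center W, where the map φ_E on K(E) restricts to a nonzero map φ_W on K(W), the algebraic closure of K(W) in K(E) is separable over K(W).) -/

import Mathlib

/-- Let `L` be a field of prime characteristic `p`, `K ⊆ L` a
subfield (given as an algebra `K → L`), and `e ≥ 1`.  Suppose `φ : L → L` is a
`p^{-e}`-linear map (additive and `φ (a^{p^e} * b) = a * φ b`) with `φ(K) ⊆ K` and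
whose restriction to `K` is not identically zero.  Then every element of `L` that is
algebraic over `K` is separable over `K`. -/
theorem stmt_1 {p : ℕ} (hp : p.Prime) {e : ℕ} (he : 1 ≤ e)
    {K L : Type*} [Field K] [Field L] [Algebra K L] [CharP L p]
    (φ : L → L)
    (hadd : ∀ a b : L, φ (a + b) = φ a + φ b)
    (hsemi : ∀ a b : L, φ (a ^ p ^ e * b) = a * φ b)
    (hK : ∀ k : K, φ (algebraMap K L k) ∈ Set.range (algebraMap K L))
    (hnz : ∃ k : K, φ (algebraMap K L k) ≠ 0) :
    ∀ α : L, IsAlgebraic K α → IsSeparable K α := by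
  classical
  intro α halg
  haveI : CharP K p := RingHom.charP (algebraMap K L) (algebraMap K L).injective p
  haveI : ExpChar L p := ExpChar.prime hp
  have hint : IsIntegral K α := halg.isIntegral
  by_contra hsep
  rcases Polynomial.separable_or p (minpoly.irreducible hint) with h | ⟨-, g, hgirr, hgf⟩
  · exact hsep h
  set A := algebraMap K L with hA
  obtain ⟨k₀, hk₀⟩ := hnz
  set m := g.natDegree with hmdef
  set n := (minpoly K α).natDegree with hndef
  have hn : n = m * p := by rw [hndef, ← hgf, Polynomial.natDegree_expand]
  have hm1 : 1 ≤ m := by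
    by_contra hm
    have hm0 : m = 0 := by omega
    rw [hm0, zero_mul] at hn
    exact absurd hn (minpoly.natDegree_pos hint).ne'
  have hmn : m < n := by
    rw [hn]
    nlinarith [hp.two_le]
  have h1 : Polynomial.aeval (α ^ p) g = 0 := by
    rw [← Polynomial.expand_aeval, hgf, minpoly.aeval]
  have h2 : ∑ i ∈ Finset.range (m + 1), A (g.coeff i) * (α ^ p) ^ i = 0 := by
    rw [← h1, Polynomial.aeval_eq_sum_range]
    simp [Algebra.smul_def]
    rfl
  set b : ℕ → K := fun i => g.coeff i ^ p ^ (e - 1) with hb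
  have h3 : ∑ i ∈ Finset.range (m + 1), (α ^ i) ^ p ^ e * A (b i) = 0 := by
    have h := congrArg (iterateFrobenius L p (e - 1)) h2
    rw [map_sum, map_zero] at h
    rw [← h]
    refine Finset.sum_congr rfl fun i _ => ?_
    have hpe : p ^ e = p * p ^ (e - 1) := by
      conv_lhs => rw [show e = 1 + (e - 1) by omega]
      rw [pow_add, pow_one]
    rw [iterateFrobenius_def, mul_pow, ← map_pow, hb, mul_comm,
      ← pow_mul, ← pow_mul, ← pow_mul]
    congr 2
    rw [hpe]
    ring
  have key : ∀ t : K, φ (A (b m * k₀ * t)) = 0 := by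
    intro t
    -- multiply h3 by A (k₀ * t) and apply φ
    have h4 : ∑ i ∈ Finset.range (m + 1), (α ^ i) ^ p ^ e * A (b i * k₀ * t) = 0 := by
      have := congrArg (fun x => x * A (k₀ * t)) h3
      simp only [zero_mul, Finset.sum_mul] at this
      rw [← this]
      refine Finset.sum_congr rfl fun i _ => ?_
      rw [map_mul, map_mul, map_mul]
      ring
    set Φ : L →+ L := AddMonoidHom.mk' φ hadd with hΦ
    have h5 : ∑ i ∈ Finset.range (m + 1), α ^ i * φ (A (b i * k₀ * t)) = 0 := by
      have := congrArg Φ h4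
      rw [map_sum, map_zero] at this
      rw [← this]
      refine Finset.sum_congr rfl fun i _ => ?_
      exact (hsemi (α ^ i) (A (b i * k₀ * t))).symm
    -- choose K-coefficients
    choose c hc using fun i => hK (b i * k₀ * t)
    set h : Polynomial K := ∑ i ∈ Finset.range (m + 1), Polynomial.C (c i) * Polynomial.X ^ i
      with hhdef
    have haeval : Polynomial.aeval α h = 0 := by
      rw [hhdef, map_sum, ← h5]
      refine Finset.sum_congr rfl fun i _ => ?_
      rw [map_mul, Polynomial.aeval_C, map_pow, Polynomial.aeval_X, hc, mul_comm]
    have hzero : h = 0 := by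
      by_contra hne
      have hd := minpoly.degree_le_of_ne_zero K α hne haeval
      have hd' : n ≤ h.natDegree := Polynomial.natDegree_le_natDegree hd
      have hd2 : h.natDegree ≤ m := by
        refine Polynomial.natDegree_sum_le_of_forall_le _ _ fun i hi => ?_
        exact (Polynomial.natDegree_C_mul_X_pow_le _ _).trans
          (by simpa using Nat.lt_succ_iff.mp (Finset.mem_range.mp hi))
      omega
    have hcm : c m = 0 := by
      have h0 : h.coeff m = 0 := by rw [hzero, Polynomial.coeff_zero]
      rw [hhdef, Polynomial.finset_sum_coeff, Finset.sum_eq_single m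
        (fun i _ hi => by simp [Polynomial.coeff_C_mul, Polynomial.coeff_X_pow, Ne.symm hi])
        (fun hnm => absurd (Finset.self_mem_range_succ m) hnm)] at h0
      simpa using h0
    rw [← hc m, hcm, map_zero]
  have hbm : b m ≠ 0 := by
    have : g.coeff m ≠ 0 := by
      rw [hmdef, ← Polynomial.leadingCoeff]
      exact Polynomial.leadingCoeff_ne_zero.mpr hgirr.ne_zero
    exact pow_ne_zero _ this
  have := key (b m)⁻¹
  rw [mul_comm (b m) k₀, mul_assoc, mul_inv_cancel₀ hbm, mul_one] at this
  exact hk₀ this
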